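/- Let f: ℝ → ℝ be convex with f ≥ 0 and f(η) = 0 for some η ≥ 0, extended spectrally to symmetric PSD matrices. Suppose W ⪰ 0 is a d×d matrix minimizing tr(f(W)) subject to constraints tr(W X Cᵢ Xᵀ) ≤ bᵢ, i = 1..m, where X ∈ ℝ^{d×n}. Then there exists an optimal solution of the form W* = η I_d + X S* Xᵀ for some symmetric S* ∈ ℝ^{n×n}. -/

import Mathlib

open Matrix

/-- The trace of the spectral extension of `f : ℝ → ℝ` applied to a Hermitian
real matrix `W`, i.e. `tr(f(W)) = ∑ⱼ f(λⱼ)`. -/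
noncomputable def spectralTrace (f : ℝ → ℝ) {n : ℕ} {W : Matrix (Fin n) (Fin n) ℝ}
    (hW : W.IsHermitian) : ℝ :=
  ∑ i, f (hW.eigenvalues i)

lemma smul_psd {d : ℕ} {A : Matrix (Fin d) (Fin d) ℝ} (hA : A.PosSemidef) {c : ℝ} (hc : 0 ≤ c) :
    (c • A).PosSemidef := by
  refine PosSemidef.of_dotProduct_mulVec_nonneg ?_ fun x => ?_
  · unfold Matrix.IsHermitian
    rw [conjTranspose_smul, hA.1.eq]
    simp
  · rw [smul_mulVec]
    have := hA.dotProduct_mulVec_nonneg x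
    simp only [dotProduct_smul, smul_eq_mul]
    exact mul_nonneg hc this

lemma psd_diag_nonneg {d : ℕ} {A : Matrix (Fin d) (Fin d) ℝ} (hA : A.PosSemidef) (j : Fin d) :
    0 ≤ A j j := by
  have := hA.dotProduct_mulVec_nonneg (Pi.single j 1)
  simpa [dotProduct, mulVec, Pi.single_apply, Finset.sum_ite_eq', Finset.sum_ite_eq] using this

lemma proj_compl_psd {d : ℕ} {P : Matrix (Fin d) (Fin d) ℝ} (hP : star P = P) (hPP : P * P = P) :
    (1 - P).PosSemidef := by
  have h1 : (1 - P) * (1 - P)ᴴ = 1 - P := by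
    rw [← Matrix.star_eq_conjTranspose]
    have hs : star (1 - P : Matrix (Fin d) (Fin d) ℝ) = 1 - P := by
      rw [star_sub, star_one, hP]
    rw [hs, Matrix.sub_mul, Matrix.mul_sub, Matrix.mul_sub, hPP]
    simp only [Matrix.one_mul, Matrix.mul_one]
    abel
  exact h1 ▸ posSemidef_self_mul_conjTranspose (1 - P)

lemma key_ineq {d : ℕ} (f : ℝ → ℝ) (hconv : ConvexOn ℝ Set.univ f) (hnn : ∀ x, 0 ≤ f x)
    {η : ℝ} (hfη : f η = 0)
    {W A P : Matrix (Fin d) (Fin d) ℝ} (hW : W.IsHermitian) (hA : A.IsHermitian)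
    (hP : star P = P) (hPP : P * P = P)
    (hAeq : A = P * W * P + η • (1 - P)) :
    spectralTrace f hA ≤ spectralTrace f hW := by
  classical
  set lam := hW.eigenvalues with hlam
  set mu := hA.eigenvalues with hmu
  set U : Matrix (Fin d) (Fin d) ℝ := (hW.eigenvectorUnitary : Matrix (Fin d) (Fin d) ℝ) with hUdef
  set V : Matrix (Fin d) (Fin d) ℝ := (hA.eigenvectorUnitary : Matrix (Fin d) (Fin d) ℝ) with hVdef
  have hU1 : U * star U = 1 := Matrix.mem_unitaryGroup_iff.mp hW.eigenvectorUnitary.2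
  have hU2 : star U * U = 1 := Matrix.mem_unitaryGroup_iff'.mp hW.eigenvectorUnitary.2
  have hV1 : V * star V = 1 := Matrix.mem_unitaryGroup_iff.mp hA.eigenvectorUnitary.2
  have hV2 : star V * V = 1 := Matrix.mem_unitaryGroup_iff'.mp hA.eigenvectorUnitary.2
  have hWspec : W = U * diagonal lam * star U := by
    have := hW.spectral_theorem
    simpa [RCLike.ofReal_real_eq_id, Function.comp] using this
  have hAspec : A = V * diagonal mu * star V := by
    have := hA.spectral_theorem
    simpa [RCLike.ofReal_real_eq_id, Function.comp] using this
  have hdiagmu : star V * A * V = diagonal mu := by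
    rw [hAspec]
    calc star V * (V * diagonal mu * star V) * V
        = (star V * V) * diagonal mu * (star V * V) := by
          simp only [Matrix.mul_assoc]
      _ = diagonal mu := by rw [hV2, Matrix.one_mul, Matrix.mul_one]
  set Q : Matrix (Fin d) (Fin d) ℝ := star U * P * V with hQdef
  have hQstar : star Q = star V * P * U := by
    rw [hQdef, StarMul.star_mul, StarMul.star_mul, star_star, hP, Matrix.mul_assoc]
  -- helper cancellation lemmas
  have hUZ : ∀ Z : Matrix (Fin d) (Fin d) ℝ, U * (star U * Z) = Z := fun Z => by
    rw [← Matrix.mul_assoc, hU1, Matrix.one_mul]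
  have hPZ : ∀ Z : Matrix (Fin d) (Fin d) ℝ, P * (P * Z) = P * Z := fun Z => by
    rw [← Matrix.mul_assoc, hPP]
  have h1 : star V * (P * W * P) * V = star Q * diagonal lam * Q := by
    rw [hWspec, hQstar, hQdef]
    simp only [Matrix.mul_assoc]
  have h2 : star Q * Q = star V * P * V := by
    rw [hQstar, hQdef]
    simp only [Matrix.mul_assoc]
    rw [hUZ, hPZ]
  have h3 : Q * star Q = star U * P * U := by
    rw [hQstar, hQdef]
    simp only [Matrix.mul_assoc]
    have hVZ : ∀ Z : Matrix (Fin d) (Fin d) ℝ, V * (star V * Z) = Z := fun Z => by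
      rw [← Matrix.mul_assoc, hV1, Matrix.one_mul]
    rw [hVZ, hPZ]
  set a : Fin d → Fin d → ℝ := fun j k => Q k j ^ 2 with hadef
  have ha0 : ∀ j k, 0 ≤ a j k := fun j k => sq_nonneg _
  have hsumaj : ∀ j, (star V * P * V) j j = ∑ k, a j k := by
    intro j
    rw [← h2]
    simp only [Matrix.mul_apply, Matrix.star_apply, star_trivial, hadef, sq]
  have hsumak : ∀ k, (star U * P * U) k k = ∑ j, a j k := by
    intro k
    rw [← h3]
    simp only [Matrix.mul_apply, Matrix.star_apply, star_trivial, hadef, sq]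
  -- diagonal entries of star V * A * V
  have hAexp : star V * A * V = star Q * diagonal lam * Q + η • (1 - star V * P * V) := by
    have e : star V * (η • (1 - P)) * V = η • (1 - star V * P * V) := by
      rw [Matrix.mul_smul, Matrix.smul_mul, Matrix.mul_sub, Matrix.sub_mul, Matrix.mul_one, hV2]
    rw [hAeq, Matrix.mul_add, Matrix.add_mul, h1, e]
  have hmuj : ∀ j, mu j = ∑ k, a j k * lam k + (1 - ∑ k, a j k) * η := by
    intro j
    have e1 : (diagonal mu) j j = mu j := by simp
    rw [← e1, ← hdiagmu, hAexp]
    have e2 : (star Q * diagonal lam * Q) j j = ∑ k, a j k * lam k := by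
      rw [Matrix.mul_assoc]
      simp only [Matrix.mul_apply, Matrix.star_apply, star_trivial, hadef, sq]
      refine Finset.sum_congr rfl fun k _ => ?_
      simp only [Matrix.diagonal_apply, ite_mul, zero_mul, Finset.sum_ite_eq, Finset.mem_univ,
        if_true]
      ring
    simp only [Matrix.add_apply, Matrix.smul_apply, Matrix.sub_apply, e2, hsumaj j]
    simp [Matrix.one_apply_eq]
    ring
  have hle1 : ∀ j, ∑ k, a j k ≤ 1 := by
    intro j
    have hpsd : (star V * (1 - P) * V).PosSemidef := by
      have := (proj_compl_psd hP hPP).conjTranspose_mul_mul_same V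
      rwa [← Matrix.star_eq_conjTranspose] at this
    have hdg := psd_diag_nonneg hpsd j
    have he : star V * (1 - P) * V = 1 - star V * P * V := by
      rw [Matrix.mul_sub, Matrix.sub_mul, Matrix.mul_one, hV2]
    rw [he] at hdg
    simp only [Matrix.sub_apply, Matrix.one_apply_eq, hsumaj j] at hdg
    linarith
  have hle2 : ∀ k, ∑ j, a j k ≤ 1 := by
    intro k
    have hpsd : (star U * (1 - P) * U).PosSemidef := by
      have := (proj_compl_psd hP hPP).conjTranspose_mul_mul_same U
      rwa [← Matrix.star_eq_conjTranspose] at this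
    have hdg := psd_diag_nonneg hpsd k
    have he : star U * (1 - P) * U = 1 - star U * P * U := by
      rw [Matrix.mul_sub, Matrix.sub_mul, Matrix.mul_one, hU2]
    rw [he] at hdg
    simp only [Matrix.sub_apply, Matrix.one_apply_eq, hsumak k] at hdg
    linarith
  -- Jensen per j
  have hjensen : ∀ j, f (mu j) ≤ ∑ k, a j k * f (lam k) := by
    intro j
    have hv : (0:ℝ) ≤ 1 - ∑ k, a j k := by linarith [hle1 j]
    have := hconv.map_add_sum_le (t := Finset.univ) (w := a j) (p := lam)
      (v := 1 - ∑ k, a j k) (q := η)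
      (fun k _ => ha0 j k) (by simp) (fun k _ => Set.mem_univ _) hv (Set.mem_univ _)
    simp only [smul_eq_mul] at this
    calc f (mu j) = f ((1 - ∑ k, a j k) * η + ∑ k, a j k * lam k) := by
          rw [hmuj j]; ring_nf
      _ ≤ (1 - ∑ k, a j k) * f η + ∑ k, a j k * f (lam k) := this
      _ = ∑ k, a j k * f (lam k) := by rw [hfη]; ring
  calc spectralTrace f hA = ∑ j, f (mu j) := rfl
    _ ≤ ∑ j, ∑ k, a j k * f (lam k) := Finset.sum_le_sum fun j _ => hjensen j
    _ = ∑ k, (∑ j, a j k) * f (lam k) := by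
        rw [Finset.sum_comm]
        exact Finset.sum_congr rfl fun k _ => by rw [Finset.sum_mul]
    _ ≤ ∑ k, f (lam k) := Finset.sum_le_sum fun k _ => by
        have := mul_le_of_le_one_left (hnn (lam k)) (hle2 k)
        simpa using this
    _ = spectralTrace f hW := rfl

theorem representer_theorem_spectral_loss {d n m : ℕ}
    (f : ℝ → ℝ) (hconv : ConvexOn ℝ Set.univ f) (hnn : ∀ x, 0 ≤ f x)
    (η : ℝ) (hη : 0 ≤ η) (hfη : f η = 0)
    (X : Matrix (Fin d) (Fin n) ℝ)
    (C : Fin m → Matrix (Fin n) (Fin n) ℝ) (b : Fin m → ℝ)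
    (W : Matrix (Fin d) (Fin d) ℝ) (hW : W.PosSemidef)
    (hfeas : ∀ i, (W * (X * C i * Xᵀ)).trace ≤ b i)
    (hopt : ∀ (W' : Matrix (Fin d) (Fin d) ℝ) (hW' : W'.PosSemidef),
      (∀ i, (W' * (X * C i * Xᵀ)).trace ≤ b i) →
      spectralTrace f hW.1 ≤ spectralTrace f hW'.1) :
    ∃ S : Matrix (Fin n) (Fin n) ℝ, Sᵀ = S ∧
      ∃ hWs : (η • (1 : Matrix (Fin d) (Fin d) ℝ) + X * S * Xᵀ).PosSemidef,
        (∀ i, ((η • (1 : Matrix (Fin d) (Fin d) ℝ) + X * S * Xᵀ)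
            * (X * C i * Xᵀ)).trace ≤ b i) ∧
        spectralTrace f hWs.1 = spectralTrace f hW.1 := by
  classical
  have hG : (X * Xᵀ).PosSemidef := by
    have := posSemidef_self_mul_conjTranspose X
    rwa [conjTranspose_eq_transpose_of_trivial] at this
  set g : Fin d → ℝ := hG.1.eigenvalues with hgdef
  set VG : Matrix (Fin d) (Fin d) ℝ := (hG.1.eigenvectorUnitary : Matrix (Fin d) (Fin d) ℝ)
    with hVGdef
  have hVG1 : VG * star VG = 1 := Matrix.mem_unitaryGroup_iff.mp hG.1.eigenvectorUnitary.2
  have hVG2 : star VG * VG = 1 := Matrix.mem_unitaryGroup_iff'.mp hG.1.eigenvectorUnitary.2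
  have hGspec : X * Xᵀ = VG * diagonal g * star VG := by
    have := hG.1.spectral_theorem
    simpa [RCLike.ofReal_real_eq_id, Function.comp] using this
  have hVZ : ∀ Z : Matrix (Fin d) (Fin d) ℝ, star VG * (VG * Z) = Z := fun Z => by
    rw [← Matrix.mul_assoc, hVG2, Matrix.one_mul]
  have hsand_star : ∀ e : Fin d → ℝ,
      star (VG * diagonal e * star VG) = VG * diagonal e * star VG := by
    intro e
    rw [StarMul.star_mul, StarMul.star_mul, star_star]
    have : star (diagonal e) = diagonal e := by
      simp [Matrix.star_eq_conjTranspose, diagonal_conjTranspose]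
    rw [this, Matrix.mul_assoc]
  have hsand_mul : ∀ e e' : Fin d → ℝ,
      (VG * diagonal e * star VG) * (VG * diagonal e' * star VG)
        = VG * diagonal (fun i => e i * e' i) * star VG := by
    intro e e'
    have hd : diagonal e * diagonal e' = diagonal (fun i => e i * e' i) := by
      rw [diagonal_mul_diagonal]
    simp only [Matrix.mul_assoc]
    rw [hVZ, ← Matrix.mul_assoc (diagonal e), hd]
  set ind : Fin d → ℝ := fun i => if g i = 0 then 0 else 1 with hinddef
  set iv : Fin d → ℝ := fun i => if g i = 0 then 0 else (g i)⁻¹ with hivdef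
  set P : Matrix (Fin d) (Fin d) ℝ := VG * diagonal ind * star VG with hPdef
  set R : Matrix (Fin d) (Fin d) ℝ := VG * diagonal iv * star VG with hRdef
  have hP : star P = P := hsand_star ind
  have hPt : Pᵀ = P := by
    rw [← conjTranspose_eq_transpose_of_trivial, ← Matrix.star_eq_conjTranspose, hP]
  have hRt : Rᵀ = R := by
    rw [← conjTranspose_eq_transpose_of_trivial, ← Matrix.star_eq_conjTranspose, hsand_star]
  have hPP : P * P = P := by
    rw [hPdef, hsand_mul]
    have : (fun i => ind i * ind i) = ind := by
      funext i; by_cases h : g i = 0 <;> simp [hinddef, h]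
    rw [this]
  have hGR : (X * Xᵀ) * R = P := by
    rw [hGspec, hRdef, hsand_mul, hPdef]
    have : (fun i => g i * iv i) = ind := by
      funext i; by_cases h : g i = 0 <;> simp [hinddef, hivdef, h, mul_inv_cancel₀]
    rw [this]
  have hRG : R * (X * Xᵀ) = P := by
    rw [hGspec, hRdef, hsand_mul, hPdef]
    have : (fun i => iv i * g i) = ind := by
      funext i; by_cases h : g i = 0 <;> simp [hinddef, hivdef, h, inv_mul_cancel₀]
    rw [this]
  have hPG : P * (X * Xᵀ) = X * Xᵀ := by
    rw [hGspec, hPdef, hsand_mul]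
    have : (fun i => ind i * g i) = g := by
      funext i; by_cases h : g i = 0 <;> simp [hinddef, h]
    rw [this]
  have hGP : (X * Xᵀ) * P = X * Xᵀ := by
    rw [hGspec, hPdef, hsand_mul]
    have : (fun i => g i * ind i) = g := by
      funext i; by_cases h : g i = 0 <;> simp [hinddef, h]
    rw [this]
  clear_value P R
  -- P * X = X
  have hPX : P * X = X := by
    have h0 : (X - P * X) * (X - P * X)ᴴ = 0 := by
      rw [conjTranspose_sub, conjTranspose_mul, conjTranspose_eq_transpose_of_trivial X,
        ← Matrix.star_eq_conjTranspose P, hP]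
      rw [Matrix.sub_mul, Matrix.mul_sub, Matrix.mul_sub]
      have e1 : X * (Xᵀ * P) = X * Xᵀ := by rw [← Matrix.mul_assoc, hGP]
      have e2 : P * X * Xᵀ = X * Xᵀ := by rw [Matrix.mul_assoc, hPG]
      have e3 : P * X * (Xᵀ * P) = X * Xᵀ := by
        rw [← Matrix.mul_assoc, Matrix.mul_assoc P X Xᵀ, hPG, hGP]
      rw [e1, e2, e3]
      abel
    have h1 : (X - P * X)ᴴᴴ * (X - P * X)ᴴ = 0 := by
      rwa [conjTranspose_conjTranspose]
    have h2 : (X - P * X)ᴴ = 0 := Matrix.conjTranspose_mul_self_eq_zero.mp h1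
    have h3 : X - P * X = 0 := by
      have := congrArg conjTranspose h2
      rwa [conjTranspose_conjTranspose, conjTranspose_zero] at this
    have := sub_eq_zero.mp h3
    exact this.symm
  have hXtP : Xᵀ * P = Xᵀ := by
    have := congrArg transpose hPX
    rwa [transpose_mul, hPt] at this
  -- the matrix M and S
  set M : Matrix (Fin d) (Fin d) ℝ := P * W * P - η • P with hMdef
  have hPM : P * M = M := by
    have e1 : P * (P * W * P) = P * W * P := by
      rw [← Matrix.mul_assoc, ← Matrix.mul_assoc, hPP]
    have e2 : P * (η • P) = η • P := by rw [Matrix.mul_smul, hPP]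
    rw [hMdef, Matrix.mul_sub, e1, e2]
  have hMP : M * P = M := by
    have e1 : P * W * P * P = P * W * P := by rw [Matrix.mul_assoc (P * W) P P, hPP]
    have e2 : (η • P) * P = η • P := by rw [Matrix.smul_mul, hPP]
    rw [hMdef, Matrix.sub_mul, e1, e2]
  set S : Matrix (Fin n) (Fin n) ℝ := Xᵀ * R * M * R * X with hSdef
  have hMt : Mᵀ = M := by
    have hWt : Wᵀ = W := by
      rw [← conjTranspose_eq_transpose_of_trivial, hW.1.eq]
    rw [hMdef, transpose_sub, transpose_smul, hPt, transpose_mul, transpose_mul, hPt, hWt,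
      Matrix.mul_assoc]
  have hSsym : Sᵀ = S := by
    rw [hSdef]
    simp only [transpose_mul, transpose_transpose, hRt, hMt]
    simp only [Matrix.mul_assoc]
  have hXSX : X * S * Xᵀ = M := by
    rw [hSdef]
    have : X * (Xᵀ * R * M * R * X) * Xᵀ = X * Xᵀ * R * M * (R * (X * Xᵀ)) := by
      simp only [Matrix.mul_assoc]
    rw [this, hGR, hRG, hPM, hMP]
  have hAform : η • (1 : Matrix (Fin d) (Fin d) ℝ) + X * S * Xᵀ = P * W * P + η • (1 - P) := by
    rw [hXSX, hMdef, smul_sub]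
    abel
  -- PSD
  have hT : (P * W * P).PosSemidef := by
    have := hW.mul_mul_conjTranspose_same P
    rwa [← Matrix.star_eq_conjTranspose, hP] at this
  have hWs : (η • (1 : Matrix (Fin d) (Fin d) ℝ) + X * S * Xᵀ).PosSemidef := by
    rw [hAform]
    exact hT.add (smul_psd (proj_compl_psd hP hPP) hη)
  -- feasibility
  have hfeas' : ∀ i, ((η • (1 : Matrix (Fin d) (Fin d) ℝ) + X * S * Xᵀ)
      * (X * C i * Xᵀ)).trace ≤ b i := by
    intro i
    set K : Matrix (Fin d) (Fin d) ℝ := X * C i * Xᵀ with hKdef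
    have hPK : P * K = K := by
      rw [hKdef, Matrix.mul_assoc X (C i) Xᵀ, ← Matrix.mul_assoc P X (C i * Xᵀ), hPX,
        ← Matrix.mul_assoc]
    have hKP : K * P = K := by
      rw [hKdef, Matrix.mul_assoc, hXtP]
    have htr : ((η • (1 : Matrix (Fin d) (Fin d) ℝ) + X * S * Xᵀ) * K).trace
        = (W * K).trace := by
      rw [hAform, Matrix.add_mul, trace_add]
      have e1 : (η • (1 - P)) * K = 0 := by
        rw [Matrix.smul_mul, Matrix.sub_mul, Matrix.one_mul, hPK, sub_self, smul_zero]
      have e2 : (P * W * P * K).trace = (W * K).trace := by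
        rw [Matrix.mul_assoc (P * W) P K, hPK, Matrix.mul_assoc P W K, trace_mul_comm,
          Matrix.mul_assoc W K P, hKP, trace_mul_comm]
      rw [e1, e2, trace_zero, add_zero]
    rw [htr]
    exact hfeas i
  refine ⟨S, hSsym, hWs, hfeas', ?_⟩
  have hle := key_ineq f hconv hnn hfη hW.1 hWs.1 hP hPP hAform
  have hge := hopt _ hWs hfeas'
  linarith
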